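/- Let B be an n×n Hermitian positive definite complex matrix with diagonal normalization B̂ and potential Γ(B) = tr(B̂^{-1}) − n. Then max(‖B̂‖, ‖B̂^{-1}‖) ≤ 1 + Γ(B)/2 + √((1 + Γ(B)/2)² − 1), where ‖·‖ is the ℓ₂ operator norm. -/

import Mathlib

open Matrix
open scoped ComplexOrder

noncomputable section

/-- `D_B^{1/2}`: the diagonal matrix whose entries are the square roots of the
diagonal entries of `B`. -/
def sqrtDiag {n : ℕ} (B : Matrix (Fin n) (Fin n) ℂ) : Matrix (Fin n) (Fin n) ℂ :=
  Matrix.diagonal fun i => (Real.sqrt (B i i).re : ℂ)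

/-- The diagonal normalization `B̂ = D_B^{-1/2} B D_B^{-1/2}`. -/
def hatM {n : ℕ} (B : Matrix (Fin n) (Fin n) ℂ) : Matrix (Fin n) (Fin n) ℂ :=
  (sqrtDiag B)⁻¹ * B * (sqrtDiag B)⁻¹

/-- The potential function `Γ(B) = tr(B̂⁻¹) − n` (a real number for Hermitian
positive definite `B`). -/
def Gamma {n : ℕ} (B : Matrix (Fin n) (Fin n) ℂ) : ℝ :=
  (Matrix.trace ((hatM B)⁻¹)).re - n

/-- The `ℓ₂` operator norm of a matrix. -/
def opNorm {m n : ℕ} (M : Matrix (Fin m) (Fin n) ℂ) : ℝ :=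
  ‖LinearMap.toContinuousLinearMap (Matrix.toEuclideanLin M)‖

/-- The condition number `κ(M) = ‖M‖·‖M⁻¹‖` in the `ℓ₂` operator norm. -/
def kappa {n : ℕ} (M : Matrix (Fin n) (Fin n) ℂ) : ℝ :=
  opNorm M * opNorm M⁻¹

namespace OpNormAux

/-- If a matrix acts diagonally on an orthonormal basis with coefficients bounded by `c`,
then its `ℓ₂` operator norm is at most `c`. -/
lemma opNorm_le_of_basis {n : ℕ} (A : Matrix (Fin n) (Fin n) ℂ)
    (b : OrthonormalBasis (Fin n) ℂ (EuclideanSpace ℂ (Fin n))) (μ : Fin n → ℂ) {c : ℝ}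
    (hc : 0 ≤ c) (hμ : ∀ i, ‖μ i‖ ≤ c)
    (h : ∀ i, A.toEuclideanLin (b i) = μ i • b i) : opNorm A ≤ c := by
  rw [opNorm]
  apply ContinuousLinearMap.opNorm_le_bound _ hc
  intro x
  rw [LinearMap.coe_toContinuousLinearMap']
  have hTx : A.toEuclideanLin x = ∑ i, (μ i * b.repr x i) • b i := by
    conv_lhs => rw [← b.sum_repr x]
    rw [map_sum]
    refine Finset.sum_congr rfl fun i _ => ?_
    rw [_root_.map_smul, h i, smul_smul, mul_comm]
  have hrepr : ∀ j, b.repr (A.toEuclideanLin x) j = μ j * b.repr x j := by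
    intro j
    rw [hTx, map_sum]
    simp only [_root_.map_smul, b.repr_self]
    classical
    rw [WithLp.ofLp_sum, Finset.sum_apply]
    simp [EuclideanSpace.single_apply]
  have h1 : ‖A.toEuclideanLin x‖ = ‖b.repr (A.toEuclideanLin x)‖ := (b.repr.norm_map _).symm
  have h2 : ‖x‖ = ‖b.repr x‖ := (b.repr.norm_map _).symm
  rw [h1, h2, EuclideanSpace.norm_eq, EuclideanSpace.norm_eq]
  rw [show c * √(∑ i, ‖b.repr x i‖ ^ 2) = √(c^2 * ∑ i, ‖b.repr x i‖ ^ 2) by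
    rw [Real.sqrt_mul (sq_nonneg c), Real.sqrt_sq hc]]
  apply Real.sqrt_le_sqrt
  rw [Finset.mul_sum]
  refine Finset.sum_le_sum fun i _ => ?_
  rw [hrepr i, norm_mul, mul_pow]
  gcongr
  exact hμ i

variable {n : ℕ} {B : Matrix (Fin n) (Fin n) ℂ}

lemma diag_pos' (hB : B.PosDef) (i : Fin n) : 0 < (B i i).re ∧ (B i i).im = 0 := by
  have hx : (Pi.single i 1 : Fin n → ℂ) ≠ 0 := by
    intro hcon
    have := congrFun hcon i
    simp at this
  have h := hB.dotProduct_mulVec_pos hx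
  have heq : star (Pi.single i 1 : Fin n → ℂ) ⬝ᵥ (B *ᵥ Pi.single i 1) = B i i := by
    simp [Matrix.mulVec_single, dotProduct, Pi.single_apply, apply_ite, Finset.sum_ite_eq']
  rw [heq, Complex.lt_def] at h
  exact ⟨by simpa using h.1, by simpa using h.2.symm⟩

lemma coe_diag (hB : B.PosDef) (i : Fin n) : B i i = ((B i i).re : ℂ) :=
  Complex.ext (by simp) (by simp [(diag_pos' hB i).2])

lemma sqrtDiag_inv (hB : B.PosDef) :
    (sqrtDiag B)⁻¹ = Matrix.diagonal fun i => ((Real.sqrt (B i i).re : ℂ))⁻¹ := by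
  apply Matrix.inv_eq_right_inv
  rw [sqrtDiag, Matrix.diagonal_mul_diagonal]
  rw [show (fun i => (Real.sqrt (B i i).re : ℂ) * ((Real.sqrt (B i i).re : ℂ))⁻¹)
      = fun _ => 1 from ?_, Matrix.diagonal_one]
  funext i
  have : ((Real.sqrt (B i i).re : ℝ) : ℂ) ≠ 0 := by
    have := (diag_pos' hB i).1
    simp only [ne_eq, Complex.ofReal_eq_zero]
    positivity
  field_simp

lemma hatM_eq (hB : B.PosDef) :
    hatM B = (Matrix.diagonal fun i => ((Real.sqrt (B i i).re : ℂ))⁻¹)ᴴ * B *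
      (Matrix.diagonal fun i => ((Real.sqrt (B i i).re : ℂ))⁻¹) := by
  rw [hatM, sqrtDiag_inv hB, Matrix.diagonal_conjTranspose]
  congr 2
  funext i
  simp [Pi.star_def, ← Complex.ofReal_inv, Complex.conj_ofReal]

lemma hatM_posDef (hB : B.PosDef) : (hatM B).PosDef := by
  rw [hatM_eq hB]
  refine Matrix.PosDef.of_dotProduct_mulVec_pos ?_ ?_
  · exact Matrix.isHermitian_conjTranspose_mul_mul _ hB.1
  · intro x hx
    have hinv : ∀ j : Fin n, ((Real.sqrt (B j j).re : ℂ))⁻¹ ≠ 0 := by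
      intro j
      have := (diag_pos' hB j).1
      simp only [ne_eq, inv_eq_zero, Complex.ofReal_eq_zero]
      positivity
    have hx' : (Matrix.diagonal fun i => ((Real.sqrt (B i i).re : ℂ))⁻¹) *ᵥ x ≠ 0 := by
      intro hcon
      apply hx
      funext j
      have := congrFun hcon j
      simp only [Matrix.mulVec_diagonal, Pi.zero_apply] at this
      rcases mul_eq_zero.mp this with h | h
      · exact absurd h (hinv j)
      · exact h
    have := hB.dotProduct_mulVec_pos hx'
    simpa only [star_mulVec, dotProduct_mulVec, vecMul_vecMul] using this

lemma hatM_diag (hB : B.PosDef) (i : Fin n) : hatM B i i = 1 := by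
  rw [hatM, sqrtDiag_inv hB]
  rw [Matrix.mul_apply]
  simp only [Matrix.diagonal_mul, Matrix.mul_diagonal, Matrix.diagonal_apply]
  classical
  rw [Finset.sum_eq_single i ?h1 (by simp)]
  · have h1 := (diag_pos' hB i).1
    set c := (B i i).re with hc
    rw [if_pos rfl, coe_diag hB i, ← hc, ← Complex.ofReal_inv, ← Complex.ofReal_mul,
      ← Complex.ofReal_mul, ← Complex.ofReal_one, Complex.ofReal_inj]
    have hss : Real.sqrt c * Real.sqrt c = c := Real.mul_self_sqrt h1.le
    have hs0 : Real.sqrt c ≠ 0 := by positivity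
    field_simp
    exact (Real.sq_sqrt h1.le).symm
  case h1 =>
    intro b _ hb
    simp only [Matrix.diagonal_apply, if_neg hb]
    simp

variable (M : Matrix (Fin n) (Fin n) ℂ) (hM : M.PosDef)

lemma trace_eq_sum_eig : Matrix.trace M = ∑ i, (hM.1.eigenvalues i : ℂ) := by
  conv_lhs => rw [hM.1.spectral_theorem, Unitary.conjStarAlgAut_apply]
  rw [Matrix.trace_mul_cycle, Unitary.coe_star_mul_self, Matrix.one_mul,
    Matrix.trace_diagonal]
  rfl

lemma diag_inv_eq : (Matrix.diagonal (RCLike.ofReal ∘ hM.1.eigenvalues : Fin n → ℂ))⁻¹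
    = Matrix.diagonal fun i => (hM.1.eigenvalues i : ℂ)⁻¹ := by
  apply Matrix.inv_eq_right_inv
  rw [Matrix.diagonal_mul_diagonal]
  rw [show (fun i => (RCLike.ofReal ∘ hM.1.eigenvalues : Fin n → ℂ) i
      * ((hM.1.eigenvalues i : ℂ))⁻¹) = fun _ => 1 from ?_, Matrix.diagonal_one]
  funext i
  have h := hM.eigenvalues_pos i
  have : ((hM.1.eigenvalues i : ℝ) : ℂ) ≠ 0 := by
    simp only [ne_eq, Complex.ofReal_eq_zero]; exact h.ne'
  simpa using mul_inv_cancel₀ this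

lemma inv_spectral : M⁻¹ = (hM.1.eigenvectorUnitary : Matrix (Fin n) (Fin n) ℂ) *
    (Matrix.diagonal fun i => (hM.1.eigenvalues i : ℂ)⁻¹) *
    (star (hM.1.eigenvectorUnitary : Matrix (Fin n) (Fin n) ℂ)) := by
  set V := (hM.1.eigenvectorUnitary : Matrix (Fin n) (Fin n) ℂ)
  have h1 : (star V)⁻¹ = V := Matrix.inv_eq_left_inv (by exact Unitary.coe_mul_star_self _)
  have h2 : V⁻¹ = star V := Matrix.inv_eq_left_inv (by exact Unitary.coe_star_mul_self _)
  conv_lhs => rw [hM.1.spectral_theorem, Unitary.conjStarAlgAut_apply]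
  rw [Matrix.mul_inv_rev, Matrix.mul_inv_rev, h1, h2, diag_inv_eq M hM, Matrix.mul_assoc]

lemma trace_inv_eq_sum_eig : Matrix.trace M⁻¹ = ∑ i, ((hM.1.eigenvalues i : ℂ))⁻¹ := by
  rw [inv_spectral M hM, Matrix.trace_mul_cycle, Unitary.coe_star_mul_self,
    Matrix.one_mul, Matrix.trace_diagonal]

lemma mulvec_eig (i : Fin n) :
    M *ᵥ ⇑(hM.1.eigenvectorBasis i) = (hM.1.eigenvalues i : ℂ) • ⇑(hM.1.eigenvectorBasis i) := by
  rw [hM.1.mulVec_eigenvectorBasis]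
  ext j; simp [RCLike.real_smul_eq_coe_smul (K := ℂ)]

lemma mulvec_inv_eig (i : Fin n) :
    M⁻¹ *ᵥ ⇑(hM.1.eigenvectorBasis i)
      = ((hM.1.eigenvalues i : ℂ))⁻¹ • ⇑(hM.1.eigenvectorBasis i) := by
  have hdet := hM.det_pos.ne'
  have hMM : M⁻¹ * M = 1 := Matrix.nonsing_inv_mul M (by simpa using hdet)
  have h0 := mulvec_eig M hM i
  have hne : ((hM.1.eigenvalues i : ℝ) : ℂ) ≠ 0 := by
    simp only [ne_eq, Complex.ofReal_eq_zero]; exact (hM.eigenvalues_pos i).ne'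
  have := congrArg (fun v => M⁻¹ *ᵥ v) h0
  simp only [Matrix.mulVec_mulVec, hMM, Matrix.one_mulVec, Matrix.mulVec_smul] at this
  conv_rhs => rw [this]
  rw [smul_smul, inv_mul_cancel₀ hne, one_smul]

lemma toEuclidean_of_mulVec (A : Matrix (Fin n) (Fin n) ℂ) (v : EuclideanSpace ℂ (Fin n))
    (μ : ℂ) (h : A *ᵥ ⇑v = μ • ⇑v) : A.toEuclideanLin v = μ • v := by
  apply PiLp.ext
  intro j
  rw [Matrix.toEuclideanLin_apply]
  simpa using congrFun h j

lemma scalar_bound {t x : ℝ} (hx : 0 < x) (h : x + x⁻¹ ≤ 2 * t) :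
    x ≤ t + Real.sqrt (t ^ 2 - 1) := by
  have hinv : x * x⁻¹ = 1 := mul_inv_cancel₀ hx.ne'
  have key : x ^ 2 + 1 ≤ 2 * t * x := by nlinarith [mul_le_mul_of_nonneg_left h hx.le]
  have ht : 1 ≤ t := by nlinarith [sq_nonneg (x - 1)]
  have h2 : (x - t) ^ 2 ≤ t ^ 2 - 1 := by nlinarith
  have h3 : x - t ≤ Real.sqrt (t ^ 2 - 1) := by
    calc x - t ≤ |x - t| := le_abs_self _
    _ = Real.sqrt ((x - t) ^ 2) := (Real.sqrt_sq_eq_abs _).symm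
    _ ≤ Real.sqrt (t ^ 2 - 1) := Real.sqrt_le_sqrt h2
  linarith

end OpNormAux

open OpNormAux in
/-- For Hermitian positive definite `B`,
`max(‖B̂‖, ‖B̂⁻¹‖) ≤ 1 + Γ(B)/2 + √((1 + Γ(B)/2)² − 1)`. -/
theorem opNorm_hat_le_of_gamma {n : ℕ} (B : Matrix (Fin n) (Fin n) ℂ) (hB : B.PosDef) :
    max (opNorm (hatM B)) (opNorm ((hatM B)⁻¹)) ≤
      1 + Gamma B / 2 + Real.sqrt ((1 + Gamma B / 2) ^ 2 - 1) := by
  set M := hatM B with hMdef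
  have hM : M.PosDef := hatM_posDef hB
  set lam : Fin n → ℝ := hM.1.eigenvalues with hlam
  have hpos : ∀ i, 0 < lam i := hM.eigenvalues_pos
  -- sum of eigenvalues is n
  have hsum1 : ∑ i, lam i = (n : ℝ) := by
    have h1 : Matrix.trace M = (n : ℂ) := by
      rw [Matrix.trace]
      simp only [Matrix.diag_apply]
      rw [Finset.sum_congr rfl fun i _ => hatM_diag hB i]
      simp
    have h2 := trace_eq_sum_eig M hM
    rw [h1] at h2
    have := congrArg Complex.re h2
    simpa using this.symm
  -- sum of inverse eigenvalues is n + Γ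
  have hsum2 : ∑ i, (lam i)⁻¹ = Gamma B + n := by
    have h2 := trace_inv_eq_sum_eig M hM
    have := congrArg Complex.re h2
    rw [Gamma]
    rw [show (Matrix.trace ((hatM B)⁻¹)).re = ∑ i, (lam i)⁻¹ from ?_]
    · ring
    · rw [← hMdef, this]
      simp [← Complex.ofReal_inv]
      rfl
  -- each term lam i + (lam i)⁻¹ - 2 is nonneg
  have hterm : ∀ i, 0 ≤ lam i + (lam i)⁻¹ - 2 := by
    intro i
    have h := hpos i
    have h2 : 0 < (lam i)⁻¹ := inv_pos.mpr h
    nlinarith [sq_nonneg (lam i - 1), mul_inv_cancel₀ h.ne']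
  have hGamma : ∑ i, (lam i + (lam i)⁻¹ - 2) = Gamma B := by
    rw [Finset.sum_sub_distrib, Finset.sum_add_distrib, hsum1, hsum2]
    simp
    ring
  have hG0 : 0 ≤ Gamma B := hGamma ▸ Finset.sum_nonneg fun i _ => hterm i
  have hkey : ∀ j, lam j + (lam j)⁻¹ ≤ 2 * (1 + Gamma B / 2) := by
    intro j
    have hle : lam j + (lam j)⁻¹ - 2 ≤ Gamma B := by
      rw [← hGamma]
      exact Finset.single_le_sum (fun i _ => hterm i) (Finset.mem_univ j)
    linarith
  set t : ℝ := 1 + Gamma B / 2 with ht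
  have ht1 : 1 ≤ t := by rw [ht]; linarith
  set c : ℝ := t + Real.sqrt (t ^ 2 - 1) with hcdef
  have hc : 0 ≤ c := by
    rw [hcdef]
    have := Real.sqrt_nonneg (t ^ 2 - 1)
    linarith
  have hb1 : opNorm M ≤ c := by
    apply opNorm_le_of_basis M hM.1.eigenvectorBasis (fun i => (lam i : ℂ)) hc
    · intro i
      rw [Complex.norm_real, Real.norm_eq_abs, abs_of_pos (hpos i)]
      exact scalar_bound (hpos i) (hkey i)
    · intro i
      exact toEuclidean_of_mulVec M _ _ (mulvec_eig M hM i)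
  have hb2 : opNorm M⁻¹ ≤ c := by
    apply opNorm_le_of_basis M⁻¹ hM.1.eigenvectorBasis (fun i => ((lam i : ℂ))⁻¹) hc
    · intro i
      rw [← Complex.ofReal_inv, Complex.norm_real, Real.norm_eq_abs,
        abs_of_pos (inv_pos.mpr (hpos i))]
      have h2 : (lam i)⁻¹ + ((lam i)⁻¹)⁻¹ ≤ 2 * t := by
        rw [inv_inv]
        linarith [hkey i]
      exact scalar_bound (inv_pos.mpr (hpos i)) h2
    · intro i
      exact toEuclidean_of_mulVec M⁻¹ _ _ (mulvec_inv_eig M hM i)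
  exact max_le hb1 hb2
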